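/- Let A : ℝ → Matrix (Fin n) (Fin n) ℂ be continuous and let Y : ℝ → Matrix (Fin n) (Fin n) ℂ satisfy Y(0) = 1 and HasDerivAt Y (A(s) * Y(s)) s for all s. Then for all t, det(Y(t)) = exp(∫_{s∈[0,t]} trace(A(s)) ds). -/

import Mathlib

open scoped Matrix.Norms.L2Operator

section aux

variable {n : ℕ}

/-- Evaluation of a matrix entry, as a continuous linear map (w.r.t. the L2 operator norm). -/
noncomputable def entryCLM (i j : Fin n) : Matrix (Fin n) (Fin n) ℂ →L[ℝ] ℂ :=
  LinearMap.toContinuousLinearMap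
    { toFun := fun M => M i j
      map_add' := fun _ _ => rfl
      map_smul' := fun _ _ => rfl }

lemma entryCLM_apply (i j : Fin n) (M : Matrix (Fin n) (Fin n) ℂ) :
    entryCLM i j M = M i j := rfl

/-- The determinant as a continuous multilinear map in the rows. -/
noncomputable def detCM (n : ℕ) :
    ContinuousMultilinearMap ℂ (fun _ : Fin n => (Fin n → ℂ)) ℂ :=
  MultilinearMap.mkContinuous
    (Matrix.detRowAlternating : (Fin n → ℂ) [⋀^Fin n]→ₗ[ℂ] ℂ).toMultilinearMap
    (n.factorial) <| by
  intro m
  have hdet : (Matrix.detRowAlternating : (Fin n → ℂ) [⋀^Fin n]→ₗ[ℂ] ℂ).toMultilinearMap m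
      = Matrix.det (Matrix.of m) := rfl
  rw [hdet, Matrix.det_apply]
  calc ‖∑ σ : Equiv.Perm (Fin n), Equiv.Perm.sign σ • ∏ i, Matrix.of m (σ i) i‖
      ≤ ∑ σ : Equiv.Perm (Fin n), ‖Equiv.Perm.sign σ • ∏ i, Matrix.of m (σ i) i‖ :=
        norm_sum_le _ _
    _ ≤ ∑ σ : Equiv.Perm (Fin n), ∏ i, ‖m i‖ := by
        refine Finset.sum_le_sum fun σ _ => ?_
        have h1 : ‖Equiv.Perm.sign σ • ∏ i, Matrix.of m (σ i) i‖
            = ‖∏ i, m (σ i) i‖ := by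
          rcases Int.units_eq_one_or (Equiv.Perm.sign σ) with h | h <;> simp [h]
        rw [h1]
        calc ‖∏ i, m (σ i) i‖ = ∏ i, ‖m (σ i) i‖ := by rw [norm_prod]
          _ ≤ ∏ i, ‖m (σ i)‖ :=
              Finset.prod_le_prod (fun i _ => norm_nonneg _)
                (fun i _ => norm_le_pi_norm (m (σ i)) i)
          _ = ∏ i, ‖m i‖ := Equiv.prod_comp σ (fun i => ‖m i‖)
    _ = (n.factorial : ℝ) * ∏ i, ‖m i‖ := by
        rw [Finset.sum_const, Finset.card_univ, Fintype.card_perm, nsmul_eq_mul]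
        simp

lemma detCM_apply (m : Fin n → (Fin n → ℂ)) :
    detCM n m = Matrix.det (Matrix.of m) := rfl

/-- Jacobi/Liouville pointwise derivative of the determinant along the flow. -/
lemma hasDerivAt_det {A : ℝ → Matrix (Fin n) (Fin n) ℂ}
    (Y : ℝ → Matrix (Fin n) (Fin n) ℂ)
    (hY : ∀ s, HasDerivAt Y (A s * Y s) s) (s : ℝ) :
    HasDerivAt (fun t => (Y t).det) ((A s).trace * (Y s).det) s := by
  -- componentwise derivatives
  have hcomp : ∀ i j : Fin n, HasDerivAt (fun t => Y t i j) ((A s * Y s) i j) s := by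
    intro i j
    have := (entryCLM i j).hasFDerivAt.comp_hasDerivAt s (hY s)
    exact this
  -- derivative of Y viewed as a map into the Pi type (rows)
  have hZ : HasDerivAt (fun t => (fun i : Fin n => Y t i : ∀ _ : Fin n, Fin n → ℂ))
      (fun i : Fin n => (A s * Y s) i : ∀ _ : Fin n, Fin n → ℂ) s := by
    exact hasDerivAt_pi.2 fun i => hasDerivAt_pi.2 fun j => hcomp i j
  have hF := (((detCM n).hasFDerivAt (x := fun i : Fin n => Y s i)).restrictScalars
    ℝ).comp_hasDerivAt s hZ
  have hval : (detCM n).linearDeriv (fun i : Fin n => Y s i)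
      (fun i : Fin n => (A s * Y s) i) = (A s).trace * (Y s).det := by
    rw [ContinuousMultilinearMap.linearDeriv_apply]
    have : ∀ i : Fin n,
        detCM n (Function.update (fun i : Fin n => Y s i) i ((A s * Y s) i))
          = A s i i * (Y s).det := by
      intro i
      have hrow : (A s * Y s) i = ∑ k, A s i k • Y s k := by
        funext j
        simp [Matrix.mul_apply, Finset.sum_apply]
      have hupd : Matrix.of (Function.update (fun i : Fin n => Y s i) i ((A s * Y s) i))
          = (Y s).updateRow i (∑ k, A s i k • Y s k) := by
        rw [← hrow]; rfl
      rw [detCM_apply, hupd, Matrix.det_updateRow_sum]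
      simp [smul_eq_mul]
    simp only [this]
    rw [← Finset.sum_mul]
    simp [Matrix.trace, Matrix.diag]
  have h2 : HasDerivAt (fun t => (Y t).det)
      (((detCM n).linearDeriv (fun i : Fin n => Y s i))
        (fun i : Fin n => (A s * Y s) i)) s := hF
  rw [hval] at h2
  exact h2
end aux

/-- Liouville's formula: if `Y' = A(s) Y`, `Y(0) = I`, then
`det (Y t) = exp (∫₀ᵗ tr (A s) ds)`. -/
theorem det_eq_exp_integral_trace {n : ℕ} (A : ℝ → Matrix (Fin n) (Fin n) ℂ)
    (hA : Continuous A) (Y : ℝ → Matrix (Fin n) (Fin n) ℂ) (hY0 : Y 0 = 1)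
    (hY : ∀ s, HasDerivAt Y (A s * Y s) s) (t : ℝ) :
    (Y t).det = Complex.exp (∫ s in (0:ℝ)..t, (A s).trace) := by
  -- trace of A is continuous
  have htr : Continuous fun s => (A s).trace := by
    have : ∀ i j : Fin n, Continuous fun s => A s i j := fun i j =>
      (entryCLM i j).continuous.comp hA
    exact continuous_finset_sum _ fun i _ => this i i
  set g : ℝ → ℂ := fun u => ∫ s in (0:ℝ)..u, (A s).trace with hg_def
  have hg : ∀ u, HasDerivAt g ((A u).trace) u := fun u =>
    (htr.integral_hasStrictDerivAt 0 u).hasDerivAt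
  set h : ℝ → ℂ := fun u => (Y u).det * Complex.exp (-g u) with hh_def
  have hh : ∀ u, HasDerivAt h 0 u := by
    intro u
    have h1 := hasDerivAt_det Y hY u
    have h2 : HasDerivAt (fun v => Complex.exp (-g v))
        (Complex.exp (-g u) * (-(A u).trace)) u := ((hg u).neg).cexp
    have := h1.mul h2
    have e : (A u).trace * (Y u).det * Complex.exp (-g u)
        + (Y u).det * (Complex.exp (-g u) * -(A u).trace) = 0 := by ring
    rw [e] at this
    exact this
  have hconst : h t = h 0 :=
    is_const_of_deriv_eq_zero (fun u => (hh u).differentiableAt)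
      (fun u => (hh u).deriv) t 0
  have h0 : h 0 = 1 := by
    simp [hh_def, hY0, hg_def, intervalIntegral.integral_same]
  have hkey : (Y t).det * Complex.exp (-g t) = 1 := hconst.trans h0
  calc (Y t).det = (Y t).det * (Complex.exp (-g t) * Complex.exp (g t)) := by
        rw [← Complex.exp_add]; simp
    _ = Complex.exp (g t) := by rw [← mul_assoc, hkey, one_mul]
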